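/- Let n ≥ 2 and 0 ≤ r < n be integers and let w_0, w_1, …, w_n be positive integers with w_0 = 1. Set d_1 = w_{r+1} + … + w_n and d_0 = w_0 + w_1 + … + w_r. Consider the multivariate Laurent polynomial over ℚ in the n−1 variables x_1,…,x_r, y_{r+1},…,y_{n−1} (an element of the monoid algebra of ℚ over the group of finitely supported ℤ-valued functions on an (n−1)-element index set) given by f = (y_{r+1} + … + y_{n−1} + 1)^{d_1} · x_1^{−w_1} ⋯ x_r^{−w_r} · y_{r+1}^{−w_{r+1}} ⋯ y_{n−1}^{−w_{n−1}} + x_1 + … + x_r. Then for every natural number m, the constant term (the coefficient of the zero exponent vector) of f^{d_0 · m} equals (d_0 m)! · (d_1 m)! / ((w_0 m)! · (w_1 m)! ⋯ (w_n m)!). -/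

import Mathlib

open Finset

private lemma pow_sum_single' {ι G : Type*} [DecidableEq ι] [AddCommMonoid G]
    (s : Finset ι) (g : ι → G) (M : ℕ) :
    (∑ i ∈ s, AddMonoidAlgebra.single (g i) (1 : ℚ)) ^ M =
      ∑ k ∈ Finset.piAntidiag s M,
        AddMonoidAlgebra.single (∑ i ∈ s, k i • g i) (Nat.multinomial s k : ℚ) := by
  rw [Finset.sum_pow_eq_sum_piAntidiag]
  refine Finset.sum_congr rfl fun k _ => ?_
  have h1 : ∀ i ∈ s, AddMonoidAlgebra.single (g i) (1:ℚ) ^ k i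
      = AddMonoidAlgebra.single (k i • g i) ((1:ℚ)) := by
    intro i _; rw [AddMonoidAlgebra.single_pow, one_pow]
  rw [Finset.prod_congr rfl h1, AddMonoidAlgebra.prod_single, Finset.prod_const_one,
    AddMonoidAlgebra.natCast_def, AddMonoidAlgebra.single_mul_single, zero_add, mul_one]



/-- Let `w_0 = 1, w_1, …, w_n` be positive integers, `0 ≤ r < n`,
`d_1 = w_{r+1} + … + w_n` and `d_0 = w_0 + … + w_r`. The Laurent polynomial
`f = (y_{r+1} + … + y_{n-1} + 1)^{d_1} · x_1^{-w_1} ⋯ x_r^{-w_r} ·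
y_{r+1}^{-w_{r+1}} ⋯ y_{n-1}^{-w_{n-1}} + x_1 + … + x_r`
(an element of the monoid algebra of `ℚ` over `Fin (n-1) →₀ ℤ`, the variable indexed by
`j : Fin (n-1)` being `x_{j+1}` if `j + 1 ≤ r` and `y_{j+1}` if `j + 1 ≥ r + 1`)
has the constant term of `f ^ (d_0 · m)` equal to
`(d_0 m)! (d_1 m)! / ((w_0 m)! ⋯ (w_n m)!)` for every natural number `m`. -/
theorem constant_terms_of_weighted_hypersurface_LG_model
    (n r : ℕ) (hn : 2 ≤ n) (hr : r < n)
    (w : ℕ → ℕ) (hwpos : ∀ j ≤ n, 0 < w j) (hw0 : w 0 = 1)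
    (d1 d0 : ℕ)
    (hd1 : d1 = ∑ j ∈ Finset.Icc (r + 1) n, w j)
    (hd0 : d0 = ∑ j ∈ Finset.Icc 0 r, w j)
    (f : AddMonoidAlgebra ℚ (Fin (n - 1) →₀ ℤ))
    (hf : f =
      ((∑ j ∈ Finset.univ.filter (fun j : Fin (n - 1) => r ≤ (j : ℕ)),
          AddMonoidAlgebra.single (Finsupp.single j 1) (1 : ℚ)) + 1) ^ d1
        * AddMonoidAlgebra.single
            (Finsupp.equivFunOnFinite.symm fun j : Fin (n - 1) => -(w ((j : ℕ) + 1) : ℤ))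
            (1 : ℚ)
      + ∑ j ∈ Finset.univ.filter (fun j : Fin (n - 1) => (j : ℕ) < r),
          AddMonoidAlgebra.single (Finsupp.single j 1) (1 : ℚ)) :
    ∀ m : ℕ,
      (f ^ (d0 * m)).coeff 0 =
        (((d0 * m).factorial : ℚ) * ((d1 * m).factorial : ℚ)) /
          ∏ j ∈ Finset.range (n + 1), ((w j * m).factorial : ℚ) := by
  classical
  intro m
  have hrn : r ≤ n - 1 := by omega
  set E : ℕ → (Fin (n - 1) →₀ ℤ) :=
    fun j => if h : j < n - 1 then Finsupp.single ⟨j, h⟩ 1 else 0 with hE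
  set v : Fin (n - 1) →₀ ℤ :=
    Finsupp.equivFunOnFinite.symm (fun j : Fin (n - 1) => -(w ((j : ℕ) + 1) : ℤ)) with hv
  have hicc : Finset.Icc r (n-1) = insert (n-1) (Finset.Ico r (n-1)) := by
    ext i; simp only [Finset.mem_Icc, Finset.mem_insert, Finset.mem_Ico]; omega
  -- rewrite the two defining sums over `Fin (n-1)` as sums over `ℕ`
  have hX : (∑ j ∈ Finset.univ.filter (fun j : Fin (n - 1) => (j : ℕ) < r),
      AddMonoidAlgebra.single (Finsupp.single j 1) (1 : ℚ))
      = ∑ i ∈ Finset.range r, AddMonoidAlgebra.single (E i) (1 : ℚ) := by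
    rw [Finset.sum_filter]
    have h1 : ∀ j : Fin (n - 1),
        (if (j : ℕ) < r then AddMonoidAlgebra.single (Finsupp.single j 1) (1:ℚ) else 0)
        = (fun i : ℕ => if i < r then AddMonoidAlgebra.single (E i) (1:ℚ) else 0) (j : ℕ) := by
      intro j
      by_cases hj : (j : ℕ) < r <;> simp [hj, hE, j.isLt]
    rw [Finset.sum_congr rfl fun j _ => h1 j,
      Fin.sum_univ_eq_sum_range
        (fun i => if i < r then AddMonoidAlgebra.single (E i) (1:ℚ) else 0) (n-1),
      ← Finset.sum_filter]
    congr 1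
    ext i
    simp only [Finset.mem_filter, Finset.mem_range]
    omega
  have hY : ((∑ j ∈ Finset.univ.filter (fun j : Fin (n - 1) => r ≤ (j : ℕ)),
      AddMonoidAlgebra.single (Finsupp.single j 1) (1 : ℚ)) + 1)
      = ∑ i ∈ Finset.Icc r (n - 1), AddMonoidAlgebra.single (E i) (1 : ℚ) := by
    rw [hicc, Finset.sum_insert (by simp)]
    have hEn : AddMonoidAlgebra.single (E (n-1)) (1:ℚ) = 1 := by
      rw [hE]; simp [AddMonoidAlgebra.one_def]
    rw [hEn, add_comm]
    congr 1
    rw [Finset.sum_filter]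
    have h1 : ∀ j : Fin (n - 1),
        (if r ≤ (j : ℕ) then AddMonoidAlgebra.single (Finsupp.single j 1) (1:ℚ) else 0)
        = (fun i : ℕ => if r ≤ i then AddMonoidAlgebra.single (E i) (1:ℚ) else 0) (j : ℕ) := by
      intro j
      by_cases hj : r ≤ (j : ℕ) <;> simp [hj, hE, j.isLt]
    rw [Finset.sum_congr rfl fun j _ => h1 j,
      Fin.sum_univ_eq_sum_range
        (fun i => if r ≤ i then AddMonoidAlgebra.single (E i) (1:ℚ) else 0) (n-1),
      ← Finset.sum_filter]
    congr 1
    ext i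
    simp only [Finset.mem_filter, Finset.mem_range, Finset.mem_Ico]
    omega
  rw [hX, hY] at hf
  set N := d0 * m with hN
  -- full expansion of f ^ N
  have hfN : f ^ N = ∑ k ∈ Finset.range (N + 1),
      ∑ b ∈ Finset.piAntidiag (Finset.Icc r (n - 1)) (d1 * k),
      ∑ a ∈ Finset.piAntidiag (Finset.range r) (N - k),
        AddMonoidAlgebra.single
          ((∑ i ∈ Finset.Icc r (n - 1), b i • E i) + k • v + ∑ i ∈ Finset.range r, a i • E i)
          ((Nat.multinomial (Finset.Icc r (n - 1)) b : ℚ) *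
            (Nat.multinomial (Finset.range r) a : ℚ) * (N.choose k : ℚ)) := by
    rw [hf, add_pow]
    refine Finset.sum_congr rfl fun k _ => ?_
    rw [mul_pow, AddMonoidAlgebra.single_pow, one_pow, ← pow_mul, pow_sum_single',
      pow_sum_single', AddMonoidAlgebra.natCast_def]
    simp only [Finset.sum_mul, Finset.mul_sum, AddMonoidAlgebra.single_mul_single, mul_one,
      add_zero]
    rw [Finset.sum_comm]
  -- coordinate computations
  have hEapp : ∀ (i j : ℕ) (hj : j < n - 1), E i ⟨j, hj⟩ = if i = j then 1 else 0 := by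
    intro i j hj
    by_cases h : i < n - 1
    · simp only [hE, dif_pos h, Finsupp.single_apply, Fin.mk.injEq]
    · have hij : i ≠ j := by omega
      simp [hE, dif_neg h, hij]
  have hsum_apply : ∀ (s : Finset ℕ) (c : ℕ → ℕ) (j : ℕ) (hj : j < n - 1),
      (∑ i ∈ s, c i • E i) ⟨j, hj⟩ = if j ∈ s then (c j : ℤ) else 0 := by
    intro s c j hj
    rw [Finsupp.finset_sum_apply]
    have h1 : ∀ i ∈ s, (c i • E i) ⟨j, hj⟩ = if i = j then (c i : ℤ) else 0 := by
      intro i _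
      rw [Finsupp.smul_apply, hEapp i j hj]
      split <;> simp
    rw [Finset.sum_congr rfl h1, Finset.sum_ite_eq' s j (fun i => (c i : ℤ))]
  have hvapp : ∀ (k j : ℕ) (hj : j < n - 1),
      (k • v) ⟨j, hj⟩ = -((k * w (j + 1) : ℕ) : ℤ) := by
    intro k j hj
    rw [Finsupp.smul_apply, hv, Finsupp.coe_equivFunOnFinite_symm]
    push_cast
    simp [nsmul_eq_mul]
  have hcoord : ∀ (k : ℕ) (a b : ℕ → ℕ),
      ((∑ i ∈ Finset.Icc r (n-1), b i • E i) + k • v + ∑ i ∈ Finset.range r, a i • E i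
        = (0 : Fin (n-1) →₀ ℤ)) →
      ∀ j : ℕ, j < n - 1 → (j < r → a j = k * w (j+1)) ∧ (r ≤ j → b j = k * w (j+1)) := by
    intro k a b h j hj
    have h' := DFunLike.congr_fun h ⟨j, hj⟩
    rw [Finsupp.add_apply, Finsupp.add_apply, hsum_apply, hsum_apply, hvapp] at h'
    simp only [Finset.mem_Icc, Finset.mem_range, Finsupp.coe_zero, Pi.zero_apply] at h'
    constructor <;> intro hc <;> (split_ifs at h' <;> omega)
  -- basic positivity and sum facts
  have hd0pos : 0 < d0 := by
    rw [hd0]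
    exact Finset.sum_pos (fun j hj => hwpos j (by simp only [Finset.mem_Icc] at hj; omega))
      ⟨0, by simp⟩
  have hmN : m ≤ N := Nat.le_mul_of_pos_left m hd0pos
  have hs1 : (∑ i ∈ Finset.range r, w (i+1)) + 1 = d0 := by
    rw [hd0, show Finset.Icc 0 r = Finset.range (r+1) from by ext i; simp,
      Finset.sum_range_succ', hw0]
  have hs2 : ∑ i ∈ Finset.Icc r (n-1), w (i+1) = d1 := by
    rw [hd1, show Finset.Icc r (n-1) = Finset.Ico r n from by ext i; simp; omega,
      show Finset.Icc (r+1) n = Finset.Ico (r+1) (n+1) from by ext i; simp,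
      Finset.sum_Ico_eq_sum_range, Finset.sum_Ico_eq_sum_range,
      show n + 1 - (r+1) = n - r from by omega]
    exact Finset.sum_congr rfl fun i _ => by rw [show r + i + 1 = r + 1 + i from by omega]
  -- the distinguished exponents
  set a₀ : ℕ → ℕ := fun j => if j < r then m * w (j+1) else 0 with ha₀
  set b₀ : ℕ → ℕ := fun j => if r ≤ j ∧ j ≤ n - 1 then m * w (j+1) else 0 with hb₀
  have hsa₀ : ∑ i ∈ Finset.range r, a₀ i = N - m := by
    have h1 : ∑ i ∈ Finset.range r, a₀ i = m * ∑ i ∈ Finset.range r, w (i+1) := by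
      rw [Finset.mul_sum]
      exact Finset.sum_congr rfl fun i hi => by
        simp only [Finset.mem_range] at hi; simp only [ha₀]; rw [if_pos hi]
    have h2 : N = m * (∑ i ∈ Finset.range r, w (i+1)) + m := by rw [hN, ← hs1]; ring
    omega
  have hsb₀ : ∑ i ∈ Finset.Icc r (n-1), b₀ i = d1 * m := by
    have h1 : ∑ i ∈ Finset.Icc r (n-1), b₀ i = m * ∑ i ∈ Finset.Icc r (n-1), w (i+1) := by
      rw [Finset.mul_sum]
      exact Finset.sum_congr rfl fun i hi => by
        simp only [Finset.mem_Icc] at hi; simp only [hb₀]; rw [if_pos hi]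
    rw [h1, hs2]; ring
  have ha₀mem : a₀ ∈ Finset.piAntidiag (Finset.range r) (N - m) := by
    rw [Finset.mem_piAntidiag]
    refine ⟨hsa₀, fun i hi => ?_⟩
    rw [Finset.mem_range]
    by_contra hc
    exact hi (by simp only [ha₀]; exact if_neg hc)
  have hb₀mem : b₀ ∈ Finset.piAntidiag (Finset.Icc r (n-1)) (d1 * m) := by
    rw [Finset.mem_piAntidiag]
    refine ⟨hsb₀, fun i hi => ?_⟩
    rw [Finset.mem_Icc]
    by_contra hc
    exact hi (by simp only [hb₀]; exact if_neg (by omega))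
  -- evaluate at 0
  have happly : (f ^ N).coeff 0 = ∑ k ∈ Finset.range (N + 1),
      ∑ b ∈ Finset.piAntidiag (Finset.Icc r (n - 1)) (d1 * k),
      ∑ a ∈ Finset.piAntidiag (Finset.range r) (N - k),
        (if ((∑ i ∈ Finset.Icc r (n - 1), b i • E i) + k • v
            + ∑ i ∈ Finset.range r, a i • E i) = 0 then
          ((Nat.multinomial (Finset.Icc r (n - 1)) b : ℚ) *
            (Nat.multinomial (Finset.range r) a : ℚ) * (N.choose k : ℚ)) else 0) := by
    rw [hfN, AddMonoidAlgebra.coeff_sum, Finsupp.finset_sum_apply]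
    refine Finset.sum_congr rfl fun k _ => ?_
    rw [AddMonoidAlgebra.coeff_sum, Finsupp.finset_sum_apply]
    refine Finset.sum_congr rfl fun b _ => ?_
    rw [AddMonoidAlgebra.coeff_sum, Finsupp.finset_sum_apply]
    refine Finset.sum_congr rfl fun a _ => ?_
    exact Finsupp.single_apply
  rw [happly]
  rw [Finset.sum_eq_single_of_mem m (Finset.mem_range.2 (by omega)) ?killk]
  case killk =>
    intro k hk hkm
    apply Finset.sum_eq_zero; intro b hb
    apply Finset.sum_eq_zero; intro a ha
    refine if_neg fun hc => hkm ?_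
    rw [Finset.mem_piAntidiag] at ha
    have hkN : k ≤ N := by simp only [Finset.mem_range] at hk; omega
    have h1 : ∑ i ∈ Finset.range r, a i = k * ∑ i ∈ Finset.range r, w (i+1) := by
      rw [Finset.mul_sum]
      exact Finset.sum_congr rfl fun i hi => by
        exact (hcoord k a b hc i (by simp only [Finset.mem_range] at hi; omega)).1
          (by simp only [Finset.mem_range] at hi; omega)
    have h2 : d0 * k = k * (∑ i ∈ Finset.range r, w (i+1)) + k := by rw [← hs1]; ring
    have h4 : ∑ i ∈ Finset.range r, a i = N - k := ha.1
    have h5 : d0 * k = d0 * m := by omega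
    exact Nat.eq_of_mul_eq_mul_left hd0pos h5
  rw [Finset.sum_eq_single_of_mem b₀ hb₀mem ?killb]
  case killb =>
    intro b hb hbne
    apply Finset.sum_eq_zero; intro a ha
    refine if_neg fun hc => hbne ?_
    rw [Finset.mem_piAntidiag] at hb
    funext j
    rcases lt_or_ge j r with h1 | h1
    · have hbj : b j = 0 := by
        by_contra hbj
        have := hb.2 j hbj
        rw [Finset.mem_Icc] at this
        omega
      simp only [hb₀]; rw [hbj, if_neg (by omega)]
    rcases Nat.lt_or_ge j (n-1) with h2 | h2
    · simp only [hb₀]; rw [(hcoord m a b hc j h2).2 h1, if_pos (by omega)]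
    rcases Nat.eq_or_lt_of_le h2 with h3 | h3
    · -- j = n - 1
      have hbsum := hb.1
      rw [hicc, Finset.sum_insert (by simp)] at hbsum
      have h4 : ∑ i ∈ Finset.Ico r (n-1), b i
          = m * ∑ i ∈ Finset.Ico r (n-1), w (i+1) := by
        rw [Finset.mul_sum]
        refine Finset.sum_congr rfl fun i hi => ?_
        rw [Finset.mem_Ico] at hi
        exact (hcoord m a b hc i hi.2).2 hi.1
      have h5 : w n + ∑ i ∈ Finset.Ico r (n-1), w (i+1) = d1 := by
        rw [← hs2, hicc, Finset.sum_insert (by simp), show n - 1 + 1 = n from by omega]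
      have h6 : d1 * m = w n * m + (∑ i ∈ Finset.Ico r (n-1), w (i+1)) * m := by
        rw [← h5]; ring
      have h7 : m * ∑ i ∈ Finset.Ico r (n-1), w (i+1)
          = (∑ i ∈ Finset.Ico r (n-1), w (i+1)) * m := by ring
      have hbj : b (n-1) = w n * m := by omega
      simp only [hb₀]
      rw [← h3, hbj, if_pos (by omega), show n - 1 + 1 = n from by omega]
      ring
    · have hbj : b j = 0 := by
        by_contra hbj
        have := hb.2 j hbj
        rw [Finset.mem_Icc] at this
        omega
      simp only [hb₀]; rw [hbj, if_neg (by omega)]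
  rw [Finset.sum_eq_single_of_mem a₀ ha₀mem ?killa]
  case killa =>
    intro a ha hane
    refine if_neg fun hc => hane ?_
    rw [Finset.mem_piAntidiag] at ha
    funext j
    rcases lt_or_ge j r with h1 | h1
    · simp only [ha₀]; rw [(hcoord m a b₀ hc j (by omega)).1 h1, if_pos h1]
    · have haj : a j = 0 := by
        by_contra haj
        have := ha.2 j haj
        rw [Finset.mem_range] at this
        omega
      simp only [ha₀]; rw [haj, if_neg (by omega)]
  rw [if_pos ?hexp]
  case hexp =>
    ext x
    obtain ⟨j, hj⟩ := x
    rw [Finsupp.add_apply, Finsupp.add_apply, hsum_apply, hsum_apply, hvapp,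
      Finsupp.zero_apply]
    simp only [Finset.mem_Icc, Finset.mem_range, ha₀, hb₀]
    split_ifs <;> push_cast <;> omega
  -- final arithmetic
  have hprodpos : (0:ℚ) < ∏ j ∈ Finset.range (n+1), ((w j * m).factorial : ℚ) :=
    Finset.prod_pos fun j _ => by positivity
  rw [eq_div_iff (ne_of_gt hprodpos)]
  have e3 : N.choose m * m.factorial * (N - m).factorial = N.factorial :=
    Nat.choose_mul_factorial_mul_factorial hmN
  have e1 : (∏ i ∈ Finset.range r, (a₀ i).factorial) * Nat.multinomial (Finset.range r) a₀
      = (N - m).factorial := by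
    have := Nat.multinomial_spec (Finset.range r) a₀
    rwa [hsa₀] at this
  have e2 : (∏ i ∈ Finset.Icc r (n-1), (b₀ i).factorial)
      * Nat.multinomial (Finset.Icc r (n-1)) b₀ = (d1 * m).factorial := by
    have := Nat.multinomial_spec (Finset.Icc r (n-1)) b₀
    rwa [hsb₀] at this
  have hsplit : ∏ j ∈ Finset.range (n+1), (w j * m).factorial
      = m.factorial * ((∏ i ∈ Finset.range r, (a₀ i).factorial)
        * ∏ i ∈ Finset.Icc r (n-1), (b₀ i).factorial) := by
    rw [Finset.prod_range_succ', hw0, one_mul, mul_comm]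
    congr 1
    rw [Finset.range_eq_Ico, ← Finset.prod_Ico_consecutive _ (Nat.zero_le r) (le_of_lt hr),
      ← Finset.range_eq_Ico]
    congr 1
    · exact Finset.prod_congr rfl fun i hi => by
        rw [Finset.mem_range] at hi
        simp only [ha₀]; rw [if_pos hi, mul_comm]
    · rw [show Finset.Ico r n = Finset.Icc r (n-1) from by ext i; simp; omega]
      exact Finset.prod_congr rfl fun i hi => by
        rw [Finset.mem_Icc] at hi
        simp only [hb₀]; rw [if_pos hi, mul_comm]
  have key : (Nat.multinomial (Finset.Icc r (n-1)) b₀) * (Nat.multinomial (Finset.range r) a₀)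
      * (N.choose m) * ∏ j ∈ Finset.range (n+1), (w j * m).factorial
      = N.factorial * (d1 * m).factorial := by
    rw [hsplit, ← e3, ← e1, ← e2]
    ring
  exact_mod_cast congrArg (fun x : ℕ => (x : ℚ)) key
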